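/- If G has an orthogonal representation in ℂ^c in which every vector has all entries of modulus 1, then G has a rank-1 quantum c-colouring; i.e., χ_q^(1)(G) ≤ ξ'(G). Explicitly, if x_v is the vector at vertex v and Δ_v the diagonal matrix with diagonal x_v, then the unitaries U_v = Δ_v F_c (F_c the discrete Fourier transform) form a quantum colouring: ⟨x_v, x_w⟩ = 0 implies all diagonal entries of (Δ_v F_c)†(Δ_w F_c) are zero. -/

import Mathlib

open Matrix

/-- The `c × c` discrete Fourier transform matrix, `(F_c)_{jk} = e^{2πijk/c}/√c`. -/
noncomputable def Fmat (c : ℕ) : Matrix (Fin c) (Fin c) ℂ :=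
  fun j k => Complex.exp (2 * Real.pi * Complex.I * (j : ℕ) * (k : ℕ) / c) / Real.sqrt c

/-- Rank-1 quantum chromatic number (unitary-matrix formulation). -/
noncomputable def qc1 {V : Type*} (G : SimpleGraph V) : ℕ :=
  sInf {c | ∃ U : V → Matrix.unitaryGroup (Fin c) ℂ,
    ∀ v w, G.Adj v w → ∀ α : Fin c,
      (((U v : Matrix (Fin c) (Fin c) ℂ))ᴴ * (U w : Matrix (Fin c) (Fin c) ℂ)) α α = 0}

/-- `ξ'(G)`: least `c` such that `G` has an orthogonal representation in `ℂ^c`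
with all entries of modulus one. -/
noncomputable def xi' {V : Type*} (G : SimpleGraph V) : ℕ :=
  sInf {c | ∃ x : V → Fin c → ℂ,
    (∀ v k, ‖x v k‖ = 1) ∧
    ∀ v w, G.Adj v w → ∑ k, (starRingEnd ℂ) (x v k) * x w k = 0}

lemma Fmat_conj_mul (c : ℕ) (j α β : Fin c) :
    star (Fmat c j α) * Fmat c j β =
      Complex.exp ((j:ℕ) * (2 * Real.pi * Complex.I * (((β:ℕ):ℂ) - ((α:ℕ):ℂ)) / c)) / c := by
  have hc : (0:ℝ) < c := Nat.cast_pos.mpr (Nat.pos_of_ne_zero (fun h => (h ▸ j).elim0))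
  have hs : ((Real.sqrt c : ℝ) : ℂ) * ((Real.sqrt c : ℝ) : ℂ) = (c : ℂ) := by
    rw [← Complex.ofReal_mul, Real.mul_self_sqrt hc.le]; norm_cast
  simp only [Fmat, Complex.star_def, map_div₀, Complex.conj_ofReal, ← Complex.exp_conj]
  rw [div_mul_div_comm, hs, ← Complex.exp_add]
  congr 1
  simp only [map_div₀, _root_.map_mul, Complex.conj_I, Complex.conj_ofReal, map_natCast,
    _root_.map_ofNat]
  have hc' : (c:ℂ) ≠ 0 := by exact_mod_cast hc.ne'
  congr 1
  field_simp
  ring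

lemma Fmat_unitary (c : ℕ) : (Fmat c)ᴴ * Fmat c = 1 := by
  ext α β
  simp only [Matrix.mul_apply, Matrix.conjTranspose_apply, Matrix.one_apply]
  have hcpos : (0:ℝ) < c := Nat.cast_pos.mpr (Nat.pos_of_ne_zero (fun h => (h ▸ α).elim0))
  have hc0 : c ≠ 0 := fun h => (h ▸ α).elim0
  have hc' : (c:ℂ) ≠ 0 := by exact_mod_cast hcpos.ne'
  simp only [Fmat_conj_mul]
  rw [← Finset.sum_div]
  set d : ℤ := (β:ℕ) - (α:ℕ) with hdd
  have hdc : (((β:ℕ):ℂ) - ((α:ℕ):ℂ)) = (d:ℂ) := by push_cast [hdd]; ring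
  set w : ℂ := 2 * Real.pi * Complex.I * (((β:ℕ):ℂ) - ((α:ℕ):ℂ)) / c with hw
  have hsum : ∑ j : Fin c, Complex.exp ((j:ℕ) * w) = ∑ j : Fin c, Complex.exp w ^ (j:ℕ) := by
    refine Finset.sum_congr rfl fun j _ => ?_
    rw [← Complex.exp_nat_mul]
  rw [hsum]
  by_cases hab : α = β
  · subst hab
    have hw0 : w = 0 := by simp [hw]
    simp [hw0, div_self hc', hc0, Finset.card_univ]
  · have h2 : (2 * (Real.pi:ℂ) * Complex.I : ℂ) ≠ 0 := by
      simp [Real.pi_ne_zero, Complex.I_ne_zero, Complex.ofReal_ne_zero]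
    have hne : Complex.exp w ≠ 1 := by
      rw [hw, hdc]
      intro hone
      rw [Complex.exp_eq_one_iff] at hone
      obtain ⟨n, hn⟩ := hone
      have h1 : (2 * (Real.pi:ℂ) * Complex.I) * ((d:ℂ)/c) =
          (2 * (Real.pi:ℂ) * Complex.I) * (n:ℂ) := by linear_combination hn
      have hd1 : (d:ℂ) / c = (n:ℂ) := mul_left_cancel₀ h2 h1
      have hd2 : (d:ℂ) = (n:ℂ) * c := by rw [← hd1]; field_simp
      have hd3 : d = n * (c:ℤ) := by exact_mod_cast hd2
      have hdne : d ≠ 0 := by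
        simp only [hdd, sub_ne_zero]
        exact_mod_cast fun h => hab (Fin.ext (by exact_mod_cast h)).symm
      have hlt : |d| < (c:ℤ) := by
        rw [hdd]
        have := α.isLt; have := β.isLt
        rw [abs_lt]; omega
      have hdvd : (c:ℤ) ∣ d := ⟨n, by linarith [hd3]⟩
      have := Int.le_of_dvd (abs_pos.mpr hdne) ((dvd_abs _ _).mpr hdvd)
      omega
    have hpow : Complex.exp w ^ c = 1 := by
      rw [← Complex.exp_nat_mul, hw, hdc]
      have : (c:ℂ) * (2 * (Real.pi:ℂ) * Complex.I * (d:ℂ) / c) =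
          (d:ℂ) * (2 * Real.pi * Complex.I) := by field_simp
      rw [this, Complex.exp_int_mul_two_pi_mul_I]
    rw [Fin.sum_univ_eq_sum_range, geom_sum_eq hne, hpow]
    simp [hab]

/-- An orthogonal representation with unit-modulus entries yields a rank-1 quantum
colouring via `U_v = Δ_v F_c`; hence `χ_q^(1)(G) ≤ ξ'(G)`. -/
theorem stmt4 {V : Type*} (G : SimpleGraph V) :
    (∀ (c : ℕ) (x : V → Fin c → ℂ),
      (∀ v k, ‖x v k‖ = 1) →
      (∀ v w, G.Adj v w → ∑ k, (starRingEnd ℂ) (x v k) * x w k = 0) →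
      (∀ v, (Matrix.diagonal (x v) * Fmat c) ∈ Matrix.unitaryGroup (Fin c) ℂ) ∧
      ∀ v w, G.Adj v w → ∀ α : Fin c,
        ((Matrix.diagonal (x v) * Fmat c)ᴴ * (Matrix.diagonal (x w) * Fmat c)) α α = 0) ∧
    qc1 G ≤ xi' G := by
  have main : ∀ (c : ℕ) (x : V → Fin c → ℂ),
      (∀ v k, ‖x v k‖ = 1) →
      (∀ v w, G.Adj v w → ∑ k, (starRingEnd ℂ) (x v k) * x w k = 0) →
      (∀ v, (Matrix.diagonal (x v) * Fmat c) ∈ Matrix.unitaryGroup (Fin c) ℂ) ∧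
      ∀ v w, G.Adj v w → ∀ α : Fin c,
        ((Matrix.diagonal (x v) * Fmat c)ᴴ * (Matrix.diagonal (x w) * Fmat c)) α α = 0 := by
    intro c x hx horth
    have hxone : ∀ v k, (starRingEnd ℂ) (x v k) * x v k = 1 := by
      intro v k
      have := Complex.normSq_eq_norm_sq (x v k)
      rw [← Complex.normSq_eq_conj_mul_self]
      rw [this, hx v k]
      norm_num
    have hdiag : ∀ v, star (Matrix.diagonal (x v)) * Matrix.diagonal (x v) = 1 := by
      intro v
      have h1 : (fun i => star (x v) i * x v i) = fun _ => (1:ℂ) := funext fun k => hxone v k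
      rw [Matrix.star_eq_conjTranspose, Matrix.diagonal_conjTranspose,
        Matrix.diagonal_mul_diagonal, h1]
      exact Matrix.diagonal_one
    constructor
    · intro v
      rw [Matrix.mem_unitaryGroup_iff']
      rw [Matrix.star_mul, mul_assoc, ← mul_assoc (star (Matrix.diagonal (x v))), hdiag v, one_mul,
        Matrix.star_eq_conjTranspose, Fmat_unitary]
    · intro v w hvw α
      have hFF : ∀ j : Fin c, star (Fmat c j α) * Fmat c j α = 1 / (c : ℂ) := by
        intro j
        have := Fmat_conj_mul c j α α
        simpa using this
      rw [Matrix.mul_apply]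
      have hterm : ∀ j ∈ Finset.univ,
          ((Matrix.diagonal (x v) * Fmat c)ᴴ) α j * (Matrix.diagonal (x w) * Fmat c) j α =
          (starRingEnd ℂ) (x v j) * x w j / c := by
        intro j _
        rw [Matrix.conjTranspose_apply, Matrix.diagonal_mul, Matrix.diagonal_mul, star_mul']
        calc star (x v j) * star (Fmat c j α) * (x w j * Fmat c j α)
            = star (x v j) * x w j * (star (Fmat c j α) * Fmat c j α) := by ring
          _ = (starRingEnd ℂ) (x v j) * x w j / c := by
              rw [hFF j, Complex.star_def]; ring
      rw [Finset.sum_congr rfl hterm, ← Finset.sum_div, horth v w hvw, zero_div]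
  refine ⟨main, ?_⟩
  have hxne : {c | ∃ x : V → Fin c → ℂ,
      (∀ v k, ‖x v k‖ = 1) ∧
      ∀ v w, G.Adj v w → ∑ k, (starRingEnd ℂ) (x v k) * x w k = 0}.Nonempty :=
    ⟨0, fun _ => Fin.elim0, fun _ k => k.elim0, fun v w _ => by simp⟩
  have hmem := Nat.sInf_mem hxne
  obtain ⟨x, hx1, hx2⟩ := hmem
  exact Nat.sInf_le ⟨fun v => ⟨Matrix.diagonal (x v) * Fmat _,
    (main _ x hx1 hx2).1 v⟩, (main _ x hx1 hx2).2⟩
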